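/- Let {Π_k}_{k=1}^{D_S} be a complete set of orthogonal projections on a D-dimensional complex Hilbert space (Π_k Hermitian, Π_k Π_ℓ = δ_{kℓ} Π_k, Σ_k Π_k = 1), and let {A_r}_{r=1}^M be arbitrary linear operators. Define P_S = (1/D) Σ_{k,r} Tr[A_r Π_k A_r† Π_k] and K = (1/D²) Σ_r |Tr A_r|². Then P_S ≥ K. -/

import Mathlib

open Matrix


lemma traceA (D : ℕ) (X : Matrix (Fin D) (Fin D) ℂ) :
    ((X * Xᴴ).trace).re = ∑ i, ∑ j, ‖X i j‖^2 := by
  push_cast [Matrix.trace, Matrix.diag, Matrix.mul_apply, Complex.re_sum,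
    Complex.mul_conj, Complex.sq_norm,
    Complex.normSq_apply]
  norm_num

lemma htrBB (D : ℕ) (Pk A : Matrix (Fin D) (Fin D) ℂ) (hH : Pkᴴ = Pk) (hI : Pk * Pk = Pk) :
    (A * Pk * Aᴴ * Pk).trace = ((Pk * A * Pk) * (Pk * A * Pk)ᴴ).trace := by
  have hBH : (Pk * A * Pk)ᴴ = Pk * Aᴴ * Pk := by
    simp [Matrix.conjTranspose_mul, hH, Matrix.mul_assoc]
  have h2 : (Pk * A * Pk) * (Pk * A * Pk)ᴴ = Pk * (A * Pk * Aᴴ * Pk) := by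
    rw [hBH]
    simp only [Matrix.mul_assoc]
    rw [← Matrix.mul_assoc Pk Pk (Aᴴ * Pk), hI]
  rw [h2, Matrix.trace_mul_comm Pk (A * Pk * Aᴴ * Pk),
    Matrix.mul_assoc (A * Pk * Aᴴ) Pk Pk, hI]

lemma s_nonneg (D : ℕ) (Pk A : Matrix (Fin D) (Fin D) ℂ) (hH : Pkᴴ = Pk)
    (hI : Pk * Pk = Pk) : 0 ≤ ((A * Pk * Aᴴ * Pk).trace).re := by
  rw [htrBB D Pk A hH hI, traceA]; positivity

lemma d_nonneg (D : ℕ) (Pk : Matrix (Fin D) (Fin D) ℂ) (hH : Pkᴴ = Pk)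
    (hI : Pk * Pk = Pk) : 0 ≤ (Pk.trace).re := by
  have h : Pk * Pkᴴ = Pk := by rw [hH, hI]
  rw [← h, traceA]; positivity

lemma key (D : ℕ) (Pk A : Matrix (Fin D) (Fin D) ℂ) (hH : Pkᴴ = Pk) (hI : Pk * Pk = Pk) :
    ‖(A * Pk).trace‖ ≤ Real.sqrt ((Pk.trace).re) * Real.sqrt (((A * Pk * Aᴴ * Pk).trace).re) := by
  set B : Matrix (Fin D) (Fin D) ℂ := Pk * A * Pk with hB
  have h1 : (A * Pk).trace = (Pkᴴ * B).trace := by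
    have hPB : Pkᴴ * B = B := by
      rw [hH, hB, ← Matrix.mul_assoc, ← Matrix.mul_assoc, hI]
    rw [hPB, hB, Matrix.trace_mul_cycle, hI, Matrix.trace_mul_comm]
  have hPd : (Pk.trace).re = ∑ i, ∑ j, ‖Pk i j‖^2 := by
    have h : Pk * Pkᴴ = Pk := by rw [hH, hI]
    conv_lhs => rw [← h]
    exact traceA D Pk
  have hBd : ((A * Pk * Aᴴ * Pk).trace).re = ∑ i, ∑ j, ‖B i j‖^2 := by
    rw [htrBB D Pk A hH hI, traceA]
  set p : EuclideanSpace ℂ (Fin D × Fin D) := WithLp.toLp 2 (fun x : Fin D × Fin D => Pk x.1 x.2) with hp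
  set b : EuclideanSpace ℂ (Fin D × Fin D) := WithLp.toLp 2 (fun x : Fin D × Fin D => B x.1 x.2) with hb
  have hinner : inner ℂ p b = (Pkᴴ * B).trace := by
    simp [PiLp.inner_apply, RCLike.inner_apply, hp, hb, Matrix.trace,
      Matrix.diag, Matrix.mul_apply, Matrix.conjTranspose_apply,
      Fintype.sum_prod_type]
    rw [Finset.sum_comm]
    exact Finset.sum_congr rfl fun _ _ => Finset.sum_congr rfl fun _ _ => mul_comm _ _
  have hnp : ‖p‖ = Real.sqrt ((Pk.trace).re) := by
    rw [EuclideanSpace.norm_eq, hPd, Fintype.sum_prod_type]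
  have hnb : ‖b‖ = Real.sqrt (((A * Pk * Aᴴ * Pk).trace).re) := by
    rw [EuclideanSpace.norm_eq, hBd, Fintype.sum_prod_type]
  calc ‖(A * Pk).trace‖ = ‖inner p b (𝕜 := ℂ)‖ := by rw [hinner, h1]
    _ ≤ ‖p‖ * ‖b‖ := norm_inner_le_norm p b
    _ = _ := by rw [hnp, hnb]

/-- the universal dynamical inequality `P_S ≥ K` for a complete set of
orthogonal projections and arbitrary Kraus operators. -/
theorem stmt2 (D DS M : ℕ) (P : Fin DS → Matrix (Fin D) (Fin D) ℂ)
    (hherm : ∀ k, (P k)ᴴ = P k)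
    (horth : ∀ k l, P k * P l = if k = l then P k else 0)
    (hcomp : ∑ k, P k = 1)
    (A : Fin M → Matrix (Fin D) (Fin D) ℂ) :
    (1 / (D : ℝ) ^ 2) * ∑ r, ‖(A r).trace‖ ^ 2 ≤
      (1 / (D : ℝ)) * ∑ k, ∑ r, ((A r * P k * (A r)ᴴ * P k).trace).re := by
  have hI : ∀ k, P k * P k = P k := fun k => by simpa using horth k k
  set d : Fin DS → ℝ := fun k => ((P k).trace).re with hd
  have hsumd : ∑ k, d k = (D : ℝ) := by
    have : (∑ k, (P k).trace) = (D : ℂ) := by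
      rw [← Matrix.trace_sum, hcomp, Matrix.trace_one]; simp
    calc ∑ k, d k = (∑ k, (P k).trace).re := by rw [Complex.re_sum]
      _ = (D : ℝ) := by rw [this]; simp
  have main : ∀ r, ‖(A r).trace‖ ^ 2 ≤
      (D : ℝ) * ∑ k, ((A r * P k * (A r)ᴴ * P k).trace).re := by
    intro r
    set s : Fin DS → ℝ := fun k => ((A r * P k * (A r)ᴴ * P k).trace).re with hs
    have htr : (A r).trace = ∑ k, (A r * P k).trace := by
      rw [← Matrix.trace_sum]
      congr 1
      rw [← Finset.mul_sum, hcomp, mul_one]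
    have step1 : ‖(A r).trace‖ ≤ ∑ k, Real.sqrt (d k) * Real.sqrt (s k) := by
      rw [htr]
      refine le_trans (norm_sum_le _ _) (Finset.sum_le_sum fun k _ => ?_)
      exact key D (P k) (A r) (hherm k) (hI k)
    have step2 : (∑ k, Real.sqrt (d k) * Real.sqrt (s k)) ^ 2 ≤
        (∑ k, d k) * (∑ k, s k) := by
      have h := Finset.sum_mul_sq_le_sq_mul_sq Finset.univ
        (fun k => Real.sqrt (d k)) (fun k => Real.sqrt (s k))
      have e1 : ∑ k, Real.sqrt (d k) ^ 2 = ∑ k, d k :=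
        Finset.sum_congr rfl fun k _ => Real.sq_sqrt (d_nonneg D (P k) (hherm k) (hI k))
      have e2 : ∑ k, Real.sqrt (s k) ^ 2 = ∑ k, s k :=
        Finset.sum_congr rfl fun k _ => Real.sq_sqrt (s_nonneg D (P k) (A r) (hherm k) (hI k))
      simpa [e1, e2] using h
    calc ‖(A r).trace‖ ^ 2 ≤ (∑ k, Real.sqrt (d k) * Real.sqrt (s k)) ^ 2 := by
          apply pow_le_pow_left₀ (norm_nonneg _) step1
      _ ≤ (∑ k, d k) * (∑ k, s k) := step2
      _ = (D : ℝ) * ∑ k, s k := by rw [hsumd]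
  have total : ∑ r, ‖(A r).trace‖ ^ 2 ≤
      (D : ℝ) * ∑ r, ∑ k, ((A r * P k * (A r)ᴴ * P k).trace).re := by
    rw [Finset.mul_sum]
    exact Finset.sum_le_sum fun r _ => main r
  rcases Nat.eq_zero_or_pos D with hD | hD
  · subst hD
    simp [Matrix.trace]
  · have hD' : (0:ℝ) < D := by positivity
    rw [show (∑ k, ∑ r, ((A r * P k * (A r)ᴴ * P k).trace).re)
        = ∑ r, ∑ k, ((A r * P k * (A r)ᴴ * P k).trace).re by exact Finset.sum_comm]
    calc (1 / (D : ℝ) ^ 2) * ∑ r, ‖(A r).trace‖ ^ 2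
        ≤ (1 / (D : ℝ) ^ 2) * ((D : ℝ) * ∑ r, ∑ k, ((A r * P k * (A r)ᴴ * P k).trace).re) := by
          apply mul_le_mul_of_nonneg_left total; positivity
      _ = (1 / (D : ℝ)) * ∑ r, ∑ k, ((A r * P k * (A r)ᴴ * P k).trace).re := by
          field_simp
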